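/- Let f : ℝ → ℝ be continuous and 1-periodic with f(h) > 0 for all h, and suppose f attains its minimum value m over a period at a point h⋆, i.e. m = f(h⋆) ≤ f(h) for all h. Let K > 0, C > 0, ε > 0 be constants such that: f(h) ≤ m + K·|h − h⋆|^{3/2} whenever |h − h⋆| ≤ 1; ∫₀¹ ε/f(h) dh ≤ C; and (4/(9K²C²))·ε² ≤ 1. Then m ≥ 4ε³/(27 K² C³). -/

import Mathlib

open intervalIntegral

/-- Quantitative positivity lemma: if `f` is continuous, 1-periodic and positive with
minimum `m = f(h⋆)`, `f(h) ≤ m + K|h − h⋆|^{3/2}` near `h⋆`, `∫₀¹ ε/f ≤ C`, and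
`(4/(9K²C²))ε² ≤ 1`, then `m ≥ 4ε³/(27K²C³)`. -/
theorem quantitative_positivity_lower_bound
    (f : ℝ → ℝ) (hf : Continuous f) (hper : ∀ h : ℝ, f (h + 1) = f h)
    (hpos : ∀ h : ℝ, 0 < f h)
    (hstar m : ℝ) (hm : m = f hstar) (hmin : ∀ h : ℝ, m ≤ f h)
    (K C ε : ℝ) (hK : 0 < K) (hC : 0 < C) (hε : 0 < ε)
    (hupper : ∀ h : ℝ, |h - hstar| ≤ 1 → f h ≤ m + K * |h - hstar| ^ ((3:ℝ) / 2))
    (hint : ∫ h in (0:ℝ)..1, ε / f h ≤ C)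
    (hsmall : (4 / (9 * K ^ 2 * C ^ 2)) * ε ^ 2 ≤ 1) :
    m ≥ 4 * ε ^ 3 / (27 * K ^ 2 * C ^ 3) := by
  set g : ℝ → ℝ := fun h => ε / f h with hg
  have hgc : Continuous g := continuous_const.div hf (fun h => (hpos h).ne')
  have hgper : Function.Periodic g 1 := fun h => by simp [hg, hper h]
  have hgint : ∀ a b : ℝ, IntervalIntegrable g MeasureTheory.volume a b :=
    fun a b => hgc.intervalIntegrable a b
  set s : ℝ := 2 * ε / (3 * K * C) with hs
  have hs0 : 0 < s := by positivity
  set L : ℝ := s ^ 2 with hL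
  have hL0 : 0 < L := by positivity
  have hLval : L = (4 / (9 * K ^ 2 * C ^ 2)) * ε ^ 2 := by
    rw [hL, hs]; field_simp; ring
  have hL1 : L ≤ 1 := hLval ▸ hsmall
  -- L^(3/2) = s^3
  have hL32 : L ^ ((3:ℝ)/2) = s ^ 3 := by
    rw [hL, ← Real.rpow_natCast s 2, ← Real.rpow_mul hs0.le]
    norm_num
  set A : ℝ := K * s ^ 3 with hA
  have hA0 : 0 < A := by positivity
  have hm0 : 0 < m := hm ▸ hpos hstar
  -- pointwise bound on [hstar, hstar + L]
  have hbound : ∀ x ∈ Set.Icc hstar (hstar + L), ε / (m + A) ≤ g x := by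
    intro x hx
    have hxd : 0 ≤ x - hstar := by linarith [hx.1]
    have hxL : x - hstar ≤ L := by linarith [hx.2]
    have habs : |x - hstar| = x - hstar := abs_of_nonneg hxd
    have h1 : |x - hstar| ≤ 1 := by rw [habs]; linarith
    have h2 : |x - hstar| ^ ((3:ℝ)/2) ≤ L ^ ((3:ℝ)/2) :=
      Real.rpow_le_rpow (abs_nonneg _) (by rwa [habs]) (by norm_num)
    have h3 : f x ≤ m + A := by
      have := hupper x h1
      rw [hA, ← hL32]
      nlinarith [h2]
    exact div_le_div_of_nonneg_left hε.le (hpos x) h3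
  -- lower bound the integral over [hstar, hstar+L]
  have hmid : L * ε / (m + A) ≤ ∫ h in hstar..(hstar + L), g h := by
    have := intervalIntegral.integral_mono_on (by linarith : hstar ≤ hstar + L)
      (intervalIntegrable_const) (hgint _ _) hbound
    simpa [intervalIntegral.integral_const, smul_eq_mul, add_sub_cancel_left,
      mul_div_assoc] using this
  have htail : 0 ≤ ∫ h in (hstar + L)..(hstar + 1), g h := by
    apply intervalIntegral.integral_nonneg (by linarith)
    intro x _
    exact div_nonneg hε.le (hpos x).le
  have hsplit : (∫ h in hstar..(hstar + L), g h) + ∫ h in (hstar + L)..(hstar + 1), g h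
      = ∫ h in hstar..(hstar + 1), g h :=
    intervalIntegral.integral_add_adjacent_intervals (hgint _ _) (hgint _ _)
  have hperint : (∫ h in hstar..(hstar + 1), g h) = ∫ h in (0:ℝ)..1, g h := by
    have := hgper.intervalIntegral_add_eq hstar 0
    simpa using this
  have hkey : L * ε / (m + A) ≤ C := by
    calc L * ε / (m + A) ≤ ∫ h in hstar..(hstar + L), g h := hmid
      _ ≤ ∫ h in hstar..(hstar + 1), g h := by linarith [htail, hsplit.symm.le]
      _ = ∫ h in (0:ℝ)..1, g h := hperint
      _ ≤ C := hint
  have hmA : 0 < m + A := by linarith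
  have hkey2 : L * ε ≤ C * (m + A) := by
    have := (div_le_iff₀ hmA).mp hkey
    linarith
  have hLe : L * ε = 4 * ε ^ 3 / (9 * K ^ 2 * C ^ 2) := by
    rw [hLval]; ring
  have hCA : C * A = 8 * ε ^ 3 / (27 * K ^ 2 * C ^ 2) := by
    rw [hA, hs]; field_simp; ring
  have h4 : C * m ≥ L * ε - C * A := by linarith
  have h5 : L * ε - C * A = C * (4 * ε ^ 3 / (27 * K ^ 2 * C ^ 3)) := by
    rw [hLe, hCA]; field_simp; ring
  rw [h5] at h4
  exact (mul_le_mul_iff_right₀ hC).mp h4
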